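/- (Theorem 2.2) Let (p_n) and (q_n) be sequences with 0 < q_n < p_n ≤ 1 for all n, lim_{n→∞} p_n = 1 and lim_{n→∞} q_n = 1. Then for every modulus of continuity ω and every function f ∈ H_ω, the sequence of sup norms ‖L_n^{p_n,q_n}(f;·) − f‖ = sup_{x≥0} |L_n^{p_n,q_n}(f;x) − f(x)| converges statistically to 0. -/

import Mathlib

open Finset Filter
open scoped Classical

noncomputable section

/-- The `(p,q)`-integer `[n]_{p,q} = (p^n - q^n)/(p - q)`. -/
def pqInt (p q : ℝ) (n : ℕ) : ℝ := (p ^ n - q ^ n) / (p - q)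

/-- The `(p,q)`-factorial. -/
def pqFact (p q : ℝ) : ℕ → ℝ
  | 0 => 1
  | n + 1 => pqFact p q n * pqInt p q (n + 1)

/-- The `(p,q)`-binomial coefficient. -/
def pqBinom (p q : ℝ) (n k : ℕ) : ℝ :=
  pqFact p q n / (pqFact p q k * pqFact p q (n - k))

/-- `ℓ_n^{p,q}(x) = ∏_{s=0}^{n-1} (p^s + q^s x)`. -/
def pqEll (p q : ℝ) (n : ℕ) (x : ℝ) : ℝ :=
  ∏ s ∈ Finset.range n, (p ^ s + q ^ s * x)

/-- The node `p^{n-k+1}[k]_{p,q} / ([n-k+1]_{p,q} q^k)`. -/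
def pqNode (p q : ℝ) (n k : ℕ) : ℝ :=
  p ^ (n - k + 1) * pqInt p q k / (pqInt p q (n - k + 1) * q ^ k)

/-- The `(p,q)`-Bleimann–Butzer–Hahn operator. -/
def bbh (p q : ℝ) (n : ℕ) (f : ℝ → ℝ) (x : ℝ) : ℝ :=
  (p * q / pqEll p q n x) *
    ∑ k ∈ Finset.range (n + 1),
      f (pqNode p q n k) * p ^ ((n - k) * (n - k - 1) / 2) *
        q ^ (k * (k - 1) / 2) * pqBinom p q n k * x ^ k

/-- `δ_n(x)` from Theorem 3.1. -/
def pqDelta (p q : ℝ) (n : ℕ) (x : ℝ) : ℝ :=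
  (x / (1 + x)) ^ 2 *
      (p ^ 2 * q ^ 3 * pqInt p q n * pqInt p q (n - 1) / (pqInt p q (n + 1)) ^ 2 *
          ((1 + x) / (p + q * x)) -
        2 * p * q * pqInt p q n / pqInt p q (n + 1) + 1) +
    p ^ (n + 2) * q * pqInt p q n / (pqInt p q (n + 1)) ^ 2 * (x / (1 + x))

/-- Statistical convergence of a real sequence. -/
def StatConv (a : ℕ → ℝ) (l : ℝ) : Prop :=
  ∀ ε > (0 : ℝ), Tendsto (fun n : ℕ =>
    (((Finset.range (n + 1)).filter (fun k => ε ≤ |a k - l|)).card : ℝ) / n)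
    atTop (nhds 0)

/-- A modulus of continuity. -/
def IsModulus (ω : ℝ → ℝ) : Prop :=
  (∀ δ, 0 ≤ δ → 0 ≤ ω δ) ∧
  (∀ δ₁ δ₂, 0 ≤ δ₁ → δ₁ ≤ δ₂ → ω δ₁ ≤ ω δ₂) ∧
  (∀ δ₁ δ₂, 0 ≤ δ₁ → 0 ≤ δ₂ → ω (δ₁ + δ₂) ≤ ω δ₁ + ω δ₂) ∧
  Tendsto ω (nhdsWithin 0 (Set.Ioi 0)) (nhds 0)

/-- Membership in the class `H_ω`. -/
def MemHomega (ω f : ℝ → ℝ) : Prop :=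
  ∀ x y : ℝ, 0 ≤ x → 0 ≤ y → |f x - f y| ≤ ω |x / (1 + x) - y / (1 + y)|

/-- The modulus `ω̃(f; δ)`. -/
def omegaTilde (f : ℝ → ℝ) (δ : ℝ) : ℝ :=
  sSup {d | ∃ t x : ℝ, 0 ≤ t ∧ 0 ≤ x ∧ |t / (1 + t) - x / (1 + x)| ≤ δ ∧ d = |f t - f x|}

/-- The bivariate `(p,q)`-Bleimann–Butzer–Hahn operator. -/
def bbh2 (p₁ p₂ q₁ q₂ : ℝ) (n₁ n₂ : ℕ) (f : ℝ → ℝ → ℝ) (x y : ℝ) : ℝ :=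
  (p₁ * p₂ * q₁ * q₂ / (pqEll p₁ q₁ n₁ x * pqEll p₂ q₂ n₂ y)) *
    ∑ k₁ ∈ Finset.range (n₁ + 1), ∑ k₂ ∈ Finset.range (n₂ + 1),
      f (pqNode p₁ q₁ n₁ k₁) (pqNode p₂ q₂ n₂ k₂) *
        p₁ ^ ((n₁ - k₁) * (n₁ - k₁ - 1) / 2) * q₁ ^ (k₁ * (k₁ - 1) / 2) *
        p₂ ^ ((n₂ - k₂) * (n₂ - k₂ - 1) / 2) * q₂ ^ (k₂ * (k₂ - 1) / 2) *
        pqBinom p₁ q₁ n₁ k₁ * pqBinom p₂ q₂ n₂ k₂ * x ^ k₁ * y ^ k₂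

/-- Statistical convergence of a double real sequence (Pringsheim sense). -/
def StatConv2 (a : ℕ → ℕ → ℝ) (l : ℝ) : Prop :=
  ∀ ε > (0 : ℝ), Tendsto (fun N : ℕ × ℕ =>
    ((((Finset.range (N.1 + 1)) ×ˢ (Finset.range (N.2 + 1))).filter
        (fun jk => ε ≤ |a jk.1 jk.2 - l|)).card : ℝ) / (N.1 * N.2))
    atTop (nhds 0)

/-- A bivariate modulus of continuity. -/
def IsModulus2 (ω : ℝ → ℝ → ℝ) : Prop :=
  (∀ a b, 0 ≤ a → 0 ≤ b → 0 ≤ ω a b) ∧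
  (∀ a a' b, 0 ≤ a → a ≤ a' → 0 ≤ b → ω a b ≤ ω a' b) ∧
  (∀ a b b', 0 ≤ a → 0 ≤ b → b ≤ b' → ω a b ≤ ω a b') ∧
  (∀ a a' b, 0 ≤ a → 0 ≤ a' → 0 ≤ b → ω (a + a') b ≤ ω a b + ω a' b) ∧
  (∀ a b b', 0 ≤ a → 0 ≤ b → 0 ≤ b' → ω a (b + b') ≤ ω a b + ω a b') ∧
  Tendsto (fun d : ℝ × ℝ => ω d.1 d.2)
    (nhdsWithin (0, 0) (Set.Ioi 0 ×ˢ Set.Ioi 0)) (nhds 0)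

/-- Membership in the class `H_{ω₂}`. -/
def MemHomega2 (ω g : ℝ → ℝ → ℝ) : Prop :=
  ∀ u₁ v₁ u₂ v₂ : ℝ, 0 ≤ u₁ → 0 ≤ v₁ → 0 ≤ u₂ → 0 ≤ v₂ →
    |g u₁ v₁ - g u₂ v₂| ≤
      ω |u₁ / (1 + u₁) - u₂ / (1 + u₂)| |v₁ / (1 + v₁) - v₂ / (1 + v₂)|

/-- The bivariate modulus `ω̃(g; δ₁, δ₂)`. -/
def omegaTilde2 (g : ℝ → ℝ → ℝ) (δ₁ δ₂ : ℝ) : ℝ :=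
  sSup {d | ∃ t s x y : ℝ, 0 ≤ t ∧ 0 ≤ s ∧ 0 ≤ x ∧ 0 ≤ y ∧
    |t / (1 + t) - x / (1 + x)| ≤ δ₁ ∧ |s / (1 + s) - y / (1 + y)| ≤ δ₂ ∧
    d = |g t s - g x y|}

set_option maxHeartbeats 1000000

/-- coefficient -/
def cpq (p q : ℝ) (n k : ℕ) : ℝ :=
  p ^ ((n - k) * (n - k - 1) / 2) * q ^ (k * (k - 1) / 2) * pqBinom p q n k

lemma tri (m : ℕ) : (m + 1) * m / 2 = m * (m - 1) / 2 + m := by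
  cases m with
  | zero => rfl
  | succ s =>
    have h : (s + 1 + 1) * (s + 1) = (s + 1) * s + (s + 1) * 2 := by ring
    rw [h, Nat.add_mul_div_right _ _ (by norm_num : 0 < 2)]
    simp

section Basic
variable {p q : ℝ} (hq : 0 < q) (hpq : q < p)

include hq hpq

lemma hp0 : 0 < p := hq.trans hpq

lemma hpqne : p - q ≠ 0 := sub_ne_zero.mpr hpq.ne'

lemma pqInt_pos {n : ℕ} (hn : 0 < n) : 0 < pqInt p q n := by
  have : q ^ n < p ^ n := pow_lt_pow_left₀ hpq hq.le hn.ne'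
  exact div_pos (by linarith) (by linarith)

lemma pqInt_nonneg (n : ℕ) : 0 ≤ pqInt p q n := by
  cases n with
  | zero => simp [pqInt]
  | succ m => exact (pqInt_pos hq hpq (Nat.succ_pos m)).le

lemma pqInt_zero : pqInt p q 0 = 0 := by simp [pqInt]

lemma pqFact_pos (n : ℕ) : 0 < pqFact p q n := by
  induction n with
  | zero => norm_num [pqFact]
  | succ m ih => exact mul_pos ih (pqInt_pos hq hpq m.succ_pos)

lemma pqInt_split {k n : ℕ} (h : k ≤ n) :
    q ^ k * pqInt p q (n - k + 1) + p ^ (n - k + 1) * pqInt p q k = pqInt p q (n + 1) := by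
  obtain ⟨m, rfl⟩ := Nat.exists_eq_add_of_le h
  have hne := hpqne hq hpq
  simp only [Nat.add_sub_cancel_left, pqInt]
  field_simp
  ring

lemma pqInt_succ_left (n : ℕ) : pqInt p q (n + 1) = p ^ n + q * pqInt p q n := by
  have hne := hpqne hq hpq
  simp only [pqInt]
  field_simp
  ring

lemma pqInt_succ_right (n : ℕ) : pqInt p q (n + 1) = p * pqInt p q n + q ^ n := by
  have hne := hpqne hq hpq
  simp only [pqInt]
  field_simp
  ring

lemma pqBinom_zero (n : ℕ) : pqBinom p q n 0 = 1 := by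
  have h := pqFact_pos hq hpq n
  simp [pqBinom, pqFact]
  exact h.ne'

lemma pqBinom_self (n : ℕ) : pqBinom p q n n = 1 := by
  have h := pqFact_pos hq hpq n
  simp [pqBinom, pqFact]
  exact h.ne'

lemma pqBinom_pos {k n : ℕ} (_ : k ≤ n) : 0 < pqBinom p q n k :=
  div_pos (pqFact_pos hq hpq n) (mul_pos (pqFact_pos hq hpq k) (pqFact_pos hq hpq _))

lemma cpq_nonneg {k n : ℕ} (h : k ≤ n) : 0 ≤ cpq p q n k := by
  have := pqBinom_pos hq hpq h
  have h1 : (0:ℝ) ≤ p ^ ((n - k) * (n - k - 1) / 2) := (pow_pos (hp0 hq hpq) _).le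
  have h2 : (0:ℝ) ≤ q ^ (k * (k - 1) / 2) := (pow_pos hq _).le
  unfold cpq; positivity

lemma pqBinom_absorb (j m : ℕ) :
    pqBinom p q (j + m + 1) (j + 1) * pqInt p q (j + 1) =
      pqInt p q (j + m + 1) * pqBinom p q (j + m) j := by
  have e1 : j + m + 1 - (j + 1) = m := by omega
  have e2 : j + m - j = m := by omega
  simp only [pqBinom, e1, e2, pqFact]
  have hfj := (pqFact_pos hq hpq j).ne'
  have hfm := (pqFact_pos hq hpq m).ne'
  have hij := (pqInt_pos hq hpq (j.succ_pos)).ne'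
  field_simp

lemma pqBinom_pascal (j m : ℕ) :
    pqBinom p q (j + m + 2) (j + 1) =
      p ^ (j + 1) * pqBinom p q (j + m + 1) (j + 1) +
        q ^ (m + 1) * pqBinom p q (j + m + 1) j := by
  have e1 : j + m + 2 - (j + 1) = m + 1 := by omega
  have e2 : j + m + 1 - (j + 1) = m := by omega
  have e3 : j + m + 1 - j = m + 1 := by omega
  have hsplit : q ^ (m + 1) * pqInt p q (j + 1) + p ^ (j + 1) * pqInt p q (m + 1)
      = pqInt p q (j + m + 2) := by
    have h := pqInt_split hq hpq (show m + 1 ≤ j + m + 1 by omega)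
    have e7 : j + m + 1 - (m + 1) = j := by omega
    rw [e7] at h
    have e8 : j + m + 1 + 1 = j + m + 2 := by omega
    rw [e8] at h
    linarith [h]
  have e9 : j + m + 2 = (j + m + 1) + 1 := by omega
  have hfj := (pqFact_pos hq hpq j).ne'
  have hfm := (pqFact_pos hq hpq m).ne'
  have hfjm := (pqFact_pos hq hpq (j + m + 1)).ne'
  have hij := (pqInt_pos hq hpq (j.succ_pos)).ne'
  have him := (pqInt_pos hq hpq (m.succ_pos)).ne'
  simp only [pqBinom, e1, e2, e3, e9, pqFact]
  rw [← hsplit]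
  field_simp
  ring

end Basic

section Binom
variable {p q : ℝ} (hq : 0 < q) (hpq : q < p)
include hq hpq

lemma cpq_pascal (i s : ℕ) :
    cpq p q (i + s + 2) (i + 1) =
      p ^ (i + s + 1) * cpq p q (i + s + 1) (i + 1) +
        q ^ (i + s + 1) * cpq p q (i + s + 1) i := by
  have e1 : i + s + 2 - (i + 1) = s + 1 := by omega
  have e2 : s + 1 - 1 = s := by omega
  have e3 : i + s + 1 - (i + 1) = s := by omega
  have e4 : i + s + 1 - i = s + 1 := by omega
  have e5 : i + 1 - 1 = i := by omega
  simp only [cpq, e1, e2, e3, e4, e5]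
  rw [pqBinom_pascal hq hpq i s, tri s, tri i]
  ring

lemma cpq_zero (n : ℕ) : cpq p q n 0 = p ^ (n * (n - 1) / 2) := by
  simp [cpq, pqBinom_zero hq hpq]

lemma cpq_diag (n : ℕ) : cpq p q n n = q ^ (n * (n - 1) / 2) := by
  simp [cpq, pqBinom_self hq hpq]

lemma pq_binom_thm (n : ℕ) (x : ℝ) :
    ∑ k ∈ Finset.range (n + 1), cpq p q n k * x ^ k = pqEll p q n x := by
  induction n with
  | zero =>
    simp [cpq, pqEll, pqBinom, pqFact]
  | succ n ih =>
    have hEll : pqEll p q (n + 1) x = pqEll p q n x * (p ^ n + q ^ n * x) := by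
      rw [pqEll, pqEll, Finset.prod_range_succ]
    rw [hEll, ← ih, Finset.sum_range_succ, Finset.sum_range_succ']
    have key : ∀ i ∈ Finset.range n, cpq p q (n + 1) (i + 1) * x ^ (i + 1)
        = cpq p q n (i + 1) * x ^ (i + 1) * p ^ n + cpq p q n i * x ^ i * (q ^ n * x) := by
      intro i hi
      have hi' := Finset.mem_range.mp hi
      obtain ⟨s, hs⟩ : ∃ s, n = i + s + 1 := ⟨n - i - 1, by omega⟩
      rw [hs, cpq_pascal hq hpq i s]
      ring
    rw [Finset.sum_congr rfl key, Finset.sum_add_distrib]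
    have h0 : cpq p q (n + 1) 0 = p ^ n * cpq p q n 0 := by
      rw [cpq_zero hq hpq, cpq_zero hq hpq]
      have e : (n + 1) * (n + 1 - 1) / 2 = n * (n - 1) / 2 + n := by
        simpa using tri n
      rw [e, pow_add]
      ring
    have hd : cpq p q (n + 1) (n + 1) = q ^ n * cpq p q n n := by
      rw [cpq_diag hq hpq, cpq_diag hq hpq]
      have e : (n + 1) * (n + 1 - 1) / 2 = n * (n - 1) / 2 + n := by
        simpa using tri n
      rw [e, pow_add]
      ring
    rw [h0, hd, mul_add, Finset.sum_mul, Finset.sum_mul, Finset.sum_range_succ']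
    conv_rhs => rw [Finset.sum_range_succ]
    ring

end Binom

section Shift
variable {p q : ℝ} (hp : 0 < p)
include hp

lemma ellShift (m : ℕ) (x : ℝ) :
    (1 + x) * (p ^ m * pqEll p q m (q * x / p)) = pqEll p q (m + 1) x := by
  have hpm : p ^ m = ∏ _s ∈ Finset.range m, p := by
    rw [Finset.prod_const, Finset.card_range]
  have h : p ^ m * pqEll p q m (q * x / p)
      = ∏ s ∈ Finset.range m, (p ^ (s + 1) + q ^ (s + 1) * x) := by
    rw [pqEll, hpm, ← Finset.prod_mul_distrib]
    refine Finset.prod_congr rfl fun s _ => ?_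
    field_simp
    ring
  rw [h, pqEll, Finset.prod_range_succ']
  simp [mul_comm]

lemma ellShift2 (m : ℕ) (x : ℝ) :
    (1 + x) * (p + q * x) * (p ^ (2 * m) * pqEll p q m (q ^ 2 * x / p ^ 2))
      = pqEll p q (m + 2) x := by
  have hpm : p ^ (2 * m) = ∏ _s ∈ Finset.range m, p ^ 2 := by
    rw [Finset.prod_const, Finset.card_range, ← pow_mul, mul_comm]
  have h : p ^ (2 * m) * pqEll p q m (q ^ 2 * x / p ^ 2)
      = ∏ s ∈ Finset.range m, (p ^ (s + 2) + q ^ (s + 2) * x) := by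
    rw [pqEll, hpm, ← Finset.prod_mul_distrib]
    refine Finset.prod_congr rfl fun s _ => ?_
    field_simp
    ring
  rw [h, pqEll, Finset.prod_range_succ', Finset.prod_range_succ']
  simp only [pow_zero, one_mul, zero_add, pow_one]
  ring

end Shift

section Moments
variable {p q : ℝ} (hq : 0 < q) (hpq : q < p)
include hq hpq

lemma I1 (n : ℕ) (x : ℝ) :
    (1 + x) * ∑ k ∈ Finset.range (n + 1),
        cpq p q n k * (p ^ (n - k + 1) * pqInt p q k) * x ^ k
      = pqInt p q n * p * x * pqEll p q n x := by
  have hp : 0 < p := hp0 hq hpq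
  cases n with
  | zero => simp [pqInt_zero hq hpq]
  | succ m =>
    rw [Finset.sum_range_succ']
    have key : ∀ j ∈ Finset.range (m + 1),
        cpq p q (m + 1) (j + 1) * (p ^ (m + 1 - (j + 1) + 1) * pqInt p q (j + 1)) * x ^ (j + 1)
          = (pqInt p q (m + 1) * p ^ (m + 1) * x) * (cpq p q m j * (q * x / p) ^ j) := by
      intro j hj
      have hj' := Finset.mem_range.mp hj
      obtain ⟨s, hs⟩ : ∃ s, m = j + s := ⟨m - j, by omega⟩
      subst hs
      have e1 : j + s + 1 - (j + 1) + 1 = s + 1 := by omega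
      have e2 : j + s + 1 - (j + 1) = s := by omega
      have e3 : s + 1 - 1 = s := by omega
      have e4 : j + 1 - 1 = j := by omega
      have e5 : j + s - j = s := by omega
      simp only [cpq, e1, e2, e3, e4, e5]
      rw [tri j]
      have habs := pqBinom_absorb hq hpq j s
      have hpj : (p : ℝ) ^ j ≠ 0 := (pow_pos hp j).ne'
      simp only [div_pow]
      field_simp
      linear_combination (q ^ (j * (j - 1) / 2) * q ^ j *
        p ^ (s + 1) * x ^ (j + 1) * p ^ j) * habs
    rw [Finset.sum_congr rfl key, ← Finset.mul_sum, pq_binom_thm hq hpq m (q * x / p)]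
    simp only [pqInt_zero hq hpq, mul_zero, zero_mul, mul_one, add_zero, pow_zero]
    have hshift := ellShift (q := q) hp m x
    have hpow : (p : ℝ) ^ (m + 1) = p * p ^ m := by ring
    rw [hpow]
    linear_combination (pqInt p q (m + 1) * p * x) * hshift
end Moments

section Moments2
variable {p q : ℝ} (hq : 0 < q) (hpq : q < p)
include hq hpq

lemma I2 (n : ℕ) (x : ℝ) :
    (1 + x) * (p + q * x) * ∑ k ∈ Finset.range (n + 1),
        cpq p q n k * (p ^ (n - k + 1) * pqInt p q k) ^ 2 * x ^ k
      = pqInt p q n * p ^ 2 * x * (p ^ n + q ^ n * x) * pqEll p q n x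
        + pqInt p q n * pqInt p q (n - 1) * q * p ^ 3 * x ^ 2 * pqEll p q n x := by
  have hp : 0 < p := hp0 hq hpq
  cases n with
  | zero => simp [pqInt_zero hq hpq]
  | succ m =>
    rw [Finset.sum_range_succ']
    -- split each summand into A-part and B-part
    have key : ∀ j ∈ Finset.range (m + 1),
        cpq p q (m + 1) (j + 1) * (p ^ (m + 1 - (j + 1) + 1) * pqInt p q (j + 1)) ^ 2 * x ^ (j + 1)
          = (pqInt p q (m + 1) * p ^ (2 * (m + 1)) * x) * (cpq p q m j * (q ^ 2 * x / p ^ 2) ^ j)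
            + cpq p q (m + 1) (j + 1) * p ^ (2 * (m + 1 - (j + 1))) * p ^ 3 *
                (pqInt p q (j + 1) * pqInt p q j) * x ^ (j + 1) := by
      intro j hj
      have hj' := Finset.mem_range.mp hj
      obtain ⟨s, hs⟩ : ∃ s, m = j + s := ⟨m - j, by omega⟩
      subst hs
      have e1 : j + s + 1 - (j + 1) + 1 = s + 1 := by omega
      have e2 : j + s + 1 - (j + 1) = s := by omega
      have e3 : s + 1 - 1 = s := by omega
      have e4 : j + 1 - 1 = j := by omega
      have e5 : j + s - j = s := by omega
      simp only [cpq, e1, e2, e3, e4, e5]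
      rw [tri j]
      have habs := pqBinom_absorb hq hpq j s
      have hsucc := pqInt_succ_right hq hpq j
      have hpj : (p : ℝ) ^ j ≠ 0 := (pow_pos hp j).ne'
      simp only [div_pow]
      field_simp
      linear_combination
        (q ^ (j * (j - 1) / 2) * q ^ (2 * j) *
          p ^ (2 * s + 2) * p ^ (2 * j) * x ^ (j + 1)) * habs
        + (q ^ (j * (j - 1) / 2) * q ^ j *
            pqBinom p q (j + s + 1) (j + 1) * pqInt p q (j + 1) *
            p ^ (2 * s + 2) * p ^ (2 * j) * x ^ (j + 1)) * hsucc
    rw [Finset.sum_congr rfl key, Finset.sum_add_distrib, ← Finset.mul_sum,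
      pq_binom_thm hq hpq m (q ^ 2 * x / p ^ 2)]
    have hBsum : ∑ j ∈ Finset.range (m + 1),
        cpq p q (m + 1) (j + 1) * p ^ (2 * (m + 1 - (j + 1))) * p ^ 3 *
          (pqInt p q (j + 1) * pqInt p q j) * x ^ (j + 1)
        = (pqInt p q (m + 1) * pqInt p q m * q * p ^ (2 * m + 1) * x ^ 2) *
            pqEll p q (m - 1) (q ^ 2 * x / p ^ 2) := by
      cases m with
      | zero => simp [pqInt_zero hq hpq]
      | succ t =>
        rw [Finset.sum_range_succ']
        have key2 : ∀ i ∈ Finset.range (t + 1),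
            cpq p q (t + 1 + 1) (i + 1 + 1) * p ^ (2 * (t + 1 + 1 - (i + 1 + 1))) * p ^ 3 *
              (pqInt p q (i + 1 + 1) * pqInt p q (i + 1)) * x ^ (i + 1 + 1)
            = (pqInt p q (t + 1 + 1) * pqInt p q (t + 1) * q * p ^ (2 * (t + 1) + 1) * x ^ 2) *
                (cpq p q t i * (q ^ 2 * x / p ^ 2) ^ i) := by
          intro i hi
          have hi' := Finset.mem_range.mp hi
          obtain ⟨u, hu⟩ : ∃ u, t = i + u := ⟨t - i, by omega⟩
          subst hu
          have e1 : i + u + 1 + 1 - (i + 1 + 1) = u := by omega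
          have e2 : u - 1 = u - 1 := rfl
          have e3 : i + 1 + 1 - 1 = i + 1 := by omega
          have e4 : i + 1 - 1 = i := by omega
          have e5 : i + u - i = u := by omega
          have e6 : i + u + 1 + 1 = i + 1 + u + 1 := by omega
          have e7 : i + 1 + 1 = i + 1 + 1 := rfl
          simp only [cpq, e1, e3, e4, e5]
          rw [tri (i + 1)]
          simp only [Nat.add_sub_cancel]
          rw [tri i]
          have habs1 := pqBinom_absorb hq hpq (i + 1) u
          have habs2 := pqBinom_absorb hq hpq i u
          have e8 : i + 1 + u + 1 = i + u + 1 + 1 := by omega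
          have e9 : i + 1 + u = i + u + 1 := by omega
          rw [e8, e9] at habs1
          have hpi : (p : ℝ) ^ i ≠ 0 := (pow_pos hp i).ne'
          simp only [div_pow]
          field_simp
          linear_combination
            (q ^ (i * (i - 1) / 2) * q ^ (2 * i + 1) *
              p ^ (2 * u + 3) * p ^ (2 * i) * x ^ (i + 2) * pqInt p q (i + 1)) * habs1
            + (q ^ (i * (i - 1) / 2) * q ^ (2 * i + 1) *
              p ^ (2 * u + 3) * p ^ (2 * i) * x ^ (i + 2) * pqInt p q (i + u + 1 + 1)) * habs2
        rw [Finset.sum_congr rfl key2, ← Finset.mul_sum, pq_binom_thm hq hpq t (q ^ 2 * x / p ^ 2)]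
        simp [pqInt_zero hq hpq]
    rw [hBsum]
    simp only [pqInt_zero hq hpq, mul_zero, zero_mul, mul_one, add_zero, pow_zero, ne_eq]
    cases m with
    | zero =>
      simp [pqEll, Finset.prod_range_succ, pqInt_zero hq hpq]
      ring
    | succ t =>
      have h1 := ellShift2 (q := q) hp (t + 1) x
      have h2 := ellShift2 (q := q) hp t x
      have h3 : pqEll p q (t + 1 + 2) x = pqEll p q (t + 2) x * (p ^ (t + 2) + q ^ (t + 2) * x) := by
        rw [pqEll, pqEll, Finset.prod_range_succ]
      have e1 : t + 1 + 1 - 1 = t + 1 := by omega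
      have e0 : t + 1 + 1 = t + 2 := by omega
      rw [h3] at h1
      rw [e1, e0]
      norm_num
      linear_combination (pqInt p q (t + 2) * p ^ 2 * x) * h1
        + (pqInt p q (t + 2) * pqInt p q (t + 1) * q * p ^ 3 * x ^ 2) * h2
end Moments2

section Node
variable {p q : ℝ} (hq : 0 < q) (hpq : q < p)
include hq hpq

lemma pqNode_nonneg {k n : ℕ} (_ : k ≤ n) : 0 ≤ pqNode p q n k := by
  have hp : 0 < p := hp0 hq hpq
  unfold pqNode
  have h1 : 0 ≤ p ^ (n - k + 1) * pqInt p q k :=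
    mul_nonneg (pow_pos hp _).le (pqInt_nonneg hq hpq k)
  have h2 : 0 < pqInt p q (n - k + 1) * q ^ k :=
    mul_pos (pqInt_pos hq hpq (Nat.succ_pos _)) (pow_pos hq k)
  exact div_nonneg h1 h2.le

lemma pqNode_frac {k n : ℕ} (h : k ≤ n) :
    pqNode p q n k / (1 + pqNode p q n k)
      = p ^ (n - k + 1) * pqInt p q k / pqInt p q (n + 1) := by
  have hp : 0 < p := hp0 hq hpq
  set a := p ^ (n - k + 1) * pqInt p q k with ha
  set b := pqInt p q (n - k + 1) * q ^ k with hb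
  have ha0 : 0 ≤ a := mul_nonneg (pow_pos hp _).le (pqInt_nonneg hq hpq k)
  have hb0 : 0 < b := mul_pos (pqInt_pos hq hpq (Nat.succ_pos _)) (pow_pos hq k)
  have hsum : b + a = pqInt p q (n + 1) := by
    rw [hb, ha]
    have := pqInt_split hq hpq h
    linarith [this]
  have hN : 0 < pqInt p q (n + 1) := pqInt_pos hq hpq (Nat.succ_pos n)
  have hnode : pqNode p q n k = a / b := rfl
  have hba : b + a ≠ 0 := by rw [hsum]; exact hN.ne'
  rw [hnode, ← hsum]
  rw [show (1:ℝ) + a / b = (b + a) / b from by field_simp]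
  rw [div_div_div_cancel_right₀ (c := b) hb0.ne']

end Node

section Modulus
variable {ω : ℝ → ℝ}

lemma mod_nsmul (hω : IsModulus ω) :
    ∀ (m : ℕ), ∀ δ : ℝ, 0 ≤ δ → ω (((m + 1 : ℕ) : ℝ) * δ) ≤ ((m + 1 : ℕ) : ℝ) * ω δ := by
  intro m
  induction m with
  | zero => intro δ hδ; simp
  | succ s ih =>
    intro δ hδ
    have hc : ((s + 1 + 1 : ℕ) : ℝ) * δ = ((s + 1 : ℕ) : ℝ) * δ + δ := by push_cast; ring
    rw [hc]
    refine (hω.2.2.1 _ _ (by positivity) hδ).trans ?_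
    have := ih δ hδ
    push_cast at this ⊢
    linarith

lemma mod_quad (hω : IsModulus ω) {δ d : ℝ} (hδ : 0 < δ) (hd : 0 ≤ d) :
    ω d ≤ (1 + d ^ 2 / δ ^ 2) * ω δ := by
  have hωδ : 0 ≤ ω δ := hω.1 δ hδ.le
  rcases le_or_gt d δ with hle | hlt
  · have h1 : ω d ≤ ω δ := hω.2.1 d δ hd hle
    have h2 : 0 ≤ d ^ 2 / δ ^ 2 := by positivity
    nlinarith
  · set m := ⌈d / δ⌉₊ with hm
    have hd1 : 1 ≤ d / δ := (one_le_div hδ).mpr hlt.le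
    have hm1 : 1 ≤ m := Nat.one_le_ceil_iff.mpr (by linarith)
    obtain ⟨s, hs⟩ : ∃ s, m = s + 1 := ⟨m - 1, by omega⟩
    have hdm : d ≤ m * δ := by
      have h := Nat.le_ceil (d / δ)
      rw [← hm] at h
      exact (div_le_iff₀ hδ).mp h
    have hmono : ω d ≤ ω ((m : ℝ) * δ) := hω.2.1 d _ hd hdm
    have hsm : ω ((m : ℝ) * δ) ≤ (m : ℝ) * ω δ := by
      have := mod_nsmul hω s δ hδ.le
      rw [hs]; push_cast at this ⊢; exact this
    have hceil : (m : ℝ) ≤ d / δ + 1 := by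
      rw [hm]
      exact (Nat.ceil_lt_add_one (by positivity)).le
    have hquad : d / δ + 1 ≤ 1 + d ^ 2 / δ ^ 2 := by
      have h2 : d / δ ≤ (d / δ) ^ 2 := by nlinarith
      have h3 : (d / δ) ^ 2 = d ^ 2 / δ ^ 2 := by rw [div_pow]
      linarith
    calc ω d ≤ (m : ℝ) * ω δ := hmono.trans hsm
      _ ≤ (1 + d ^ 2 / δ ^ 2) * ω δ := by
          apply mul_le_mul_of_nonneg_right _ hωδ
          linarith

end Modulus

section Geom
variable {p q : ℝ} (hq : 0 < q) (hpq : q < p)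
include hq hpq

lemma pqInt_as_sum (n : ℕ) : pqInt p q n = ∑ i ∈ Finset.range n, p ^ i * q ^ (n - 1 - i) := by
  have h := geom_sum₂_mul p q n
  rw [pqInt, ← h, mul_div_assoc, div_self (hpqne hq hpq), mul_one]

lemma pqInt_lower (n : ℕ) : (n : ℝ) * q ^ (n - 1) ≤ pqInt p q n := by
  rw [pqInt_as_sum hq hpq n]
  have : ∀ i ∈ Finset.range n, q ^ (n - 1) ≤ p ^ i * q ^ (n - 1 - i) := by
    intro i hi
    have hi' := Finset.mem_range.mp hi
    obtain ⟨r, hr⟩ : ∃ r, n - 1 = i + r := ⟨n - 1 - i, by omega⟩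
    rw [hr, pow_add]
    have h1 : q ^ i ≤ p ^ i := pow_le_pow_left₀ hq.le hpq.le i
    have e : i + r - i = r := by omega
    rw [e]
    have h2 : (0:ℝ) < q ^ r := pow_pos hq r
    nlinarith [pow_pos hq i]
  calc (n : ℝ) * q ^ (n - 1) = ∑ _i ∈ Finset.range n, q ^ (n - 1) := by
        rw [Finset.sum_const, Finset.card_range, nsmul_eq_mul]
    _ ≤ _ := Finset.sum_le_sum this

lemma pqInt_S {n : ℕ} (hn : 1 ≤ n) :
    pqInt p q n = p ^ (n - 1) * ∑ i ∈ Finset.range n, (q / p) ^ i := by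
  have hp : 0 < p := hp0 hq hpq
  rw [pqInt_as_sum hq hpq n, Finset.mul_sum, ← Finset.sum_range_reflect]
  refine Finset.sum_congr rfl fun i hi => ?_
  have hi' := Finset.mem_range.mp hi
  have e1 : n - 1 - (n - 1 - i) = i := by omega
  rw [e1]
  obtain ⟨r, hr⟩ : ∃ r, n - 1 = i + r := ⟨n - 1 - i, by omega⟩
  rw [hr]
  have e2 : i + r - i = r := by omega
  rw [e2, div_pow, pow_add]
  field_simp

end Geom

/-- the uniform bound sequence -/
def Dq (p q : ℝ) (n : ℕ) : ℝ :=
  ((p ^ n / pqInt p q n + (p - q)) / q) ^ 2 + 1 / (q ^ 2 * n)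
    + p * p ^ n / (q ^ 2 * pqInt p q n)

section Pointwise
variable {p q : ℝ} (hq : 0 < q) (hpq : q < p) (hp1 : p ≤ 1)

include hq hpq hp1 in
lemma Rbound {x : ℝ} (hx : 0 ≤ x) (m : ℕ) :
    (1 + x) * (pqInt p q (m + 1) * p ^ 2 * x * (p ^ (m + 1) + q ^ (m + 1) * x)
        + pqInt p q (m + 1) * pqInt p q m * q * p ^ 3 * x ^ 2)
      - 2 * x ^ 2 * (p + q * x) * pqInt p q (m + 1 + 1) * (pqInt p q (m + 1) * p)
      + x ^ 2 * pqInt p q (m + 1 + 1) ^ 2 * (p + q * x)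
    ≤ Dq p q (m + 1) * ((1 + x) ^ 2 * (p + q * x) * pqInt p q (m + 1 + 1) ^ 2) := by
  set n := m + 1 with hndef
  have hp : 0 < p := hp0 hq hpq
  have hY : (0:ℝ) < 1 + x := by linarith
  have hP : (0:ℝ) < p + q * x := by positivity
  have hIn : 0 < pqInt p q n := pqInt_pos hq hpq (by omega)
  have hV : 0 < pqInt p q (n + 1) := pqInt_pos hq hpq (by omega)
  set In := pqInt p q n with hInd
  set V := pqInt p q (n + 1) with hVd
  set G := p ^ n / In with hGd
  have hG0 : 0 ≤ G := by positivity
  have hGIn : G * In = p ^ n := div_mul_cancel₀ _ hIn.ne'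
  set H := (G + (p - q)) / q with hHd
  have hH0 : 0 ≤ H := by
    apply div_nonneg _ hq.le
    have : 0 ≤ p - q := by linarith
    linarith
  have hVsum : V = p ^ n + q * In := pqInt_succ_left hq hpq n
  have hVq : q * In ≤ V := by
    rw [hVsum]
    have : (0:ℝ) < p ^ n := pow_pos hp n
    linarith
  have hV2 : q ^ 2 * In ^ 2 ≤ V ^ 2 := by
    have h := pow_le_pow_left₀ (mul_pos hq hIn).le hVq 2
    calc q ^ 2 * In ^ 2 = (q * In) ^ 2 := by ring
      _ ≤ V ^ 2 := h
  have hYP1 : p * x ≤ (1 + x) * (p + q * x) := by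
    nlinarith [mul_nonneg hq.le hx, mul_nonneg (mul_nonneg hq.le hx) hx, hp.le]
  have hYP2 : q * x ^ 2 ≤ (1 + x) * (p + q * x) := by
    nlinarith [mul_nonneg hq.le hx, mul_nonneg hp.le hx, hp.le]
  have hInlow : (n : ℝ) * q ^ (n - 1) ≤ In := pqInt_lower hq hpq n
  have hc1 : (1 + x) * (In * p ^ 2 * x * p ^ n)
      ≤ (p * p ^ n / (q ^ 2 * In)) * ((1 + x) ^ 2 * (p + q * x) * V ^ 2) := by
    have h1 : (1 + x) * (p * x) * (q ^ 2 * In ^ 2)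
        ≤ (1 + x) * ((1 + x) * (p + q * x)) * V ^ 2 := by
      apply mul_le_mul (mul_le_mul_of_nonneg_left hYP1 hY.le) hV2 (by positivity) (by positivity)
    calc (1 + x) * (In * p ^ 2 * x * p ^ n)
        = (p * p ^ n / (q ^ 2 * In)) * ((1 + x) * (p * x) * (q ^ 2 * In ^ 2)) := by
          field_simp
      _ ≤ (p * p ^ n / (q ^ 2 * In)) * ((1 + x) * ((1 + x) * (p + q * x)) * V ^ 2) := by
          apply mul_le_mul_of_nonneg_left h1 (by positivity)
      _ = (p * p ^ n / (q ^ 2 * In)) * ((1 + x) ^ 2 * (p + q * x) * V ^ 2) := by ring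
  have hc2 : (1 + x) * (In * p ^ 2 * (q ^ n * x) * x)
      ≤ (1 / (q ^ 2 * n)) * ((1 + x) ^ 2 * (p + q * x) * V ^ 2) := by
    have hq2 : q ^ 2 * q ^ (n - 1) = q ^ (n + 1) := by
      rw [← pow_add]
      congr 1
      omega
    have hV2' : (n : ℝ) * q ^ (n + 1) * In ≤ V ^ 2 := by
      have h2 : (n : ℝ) * q ^ (n - 1) * (q ^ 2 * In) ≤ In * (q ^ 2 * In) :=
        mul_le_mul_of_nonneg_right hInlow (by positivity)
      have h1 : (n : ℝ) * q ^ (n + 1) * In ≤ q ^ 2 * In ^ 2 := by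
        calc (n : ℝ) * q ^ (n + 1) * In = (n : ℝ) * q ^ (n - 1) * (q ^ 2 * In) := by
              rw [← hq2]; ring
          _ ≤ In * (q ^ 2 * In) := h2
          _ = q ^ 2 * In ^ 2 := by ring
      linarith
    have h1 : (1 + x) * (q * x ^ 2) * ((n : ℝ) * q ^ (n + 1) * In)
        ≤ (1 + x) * ((1 + x) * (p + q * x)) * V ^ 2 := by
      apply mul_le_mul (mul_le_mul_of_nonneg_left hYP2 hY.le) hV2' (by positivity) (by positivity)
    have hn0 : (0:ℝ) < (n : ℝ) := by positivity
    calc (1 + x) * (In * p ^ 2 * (q ^ n * x) * x)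
        ≤ (1 + x) * (In * (q ^ n * x) * x) := by
          have hpp : p ^ 2 ≤ 1 := pow_le_one₀ hp.le hp1
          have h3 : p ^ 2 * (In * (q ^ n * x) * x) ≤ 1 * (In * (q ^ n * x) * x) :=
            mul_le_mul_of_nonneg_right hpp (by positivity)
          apply mul_le_mul_of_nonneg_left _ hY.le
          calc In * p ^ 2 * (q ^ n * x) * x = p ^ 2 * (In * (q ^ n * x) * x) := by ring
            _ ≤ 1 * (In * (q ^ n * x) * x) := h3
            _ = In * (q ^ n * x) * x := one_mul _
      _ = (1 / (q ^ 2 * n)) * ((1 + x) * (q * x ^ 2) * ((n : ℝ) * q ^ (n + 1) * In)) := by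
          field_simp
          ring
      _ ≤ (1 / (q ^ 2 * n)) * ((1 + x) * ((1 + x) * (p + q * x)) * V ^ 2) := by
          apply mul_le_mul_of_nonneg_left h1 (by positivity)
      _ = (1 / (q ^ 2 * n)) * ((1 + x) ^ 2 * (p + q * x) * V ^ 2) := by ring
  have hc3 : (1 + x) * (In * pqInt p q m * q * p ^ 3 * x ^ 2)
        - 2 * x ^ 2 * (p + q * x) * V * (In * p) + x ^ 2 * V ^ 2 * (p + q * x)
      ≤ H ^ 2 * ((1 + x) ^ 2 * (p + q * x) * V ^ 2) := by
    have hIm : 0 ≤ pqInt p q m := pqInt_nonneg hq hpq m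
    have hup : p * pqInt p q m ≤ In := by
      rw [hInd, hndef, pqInt_succ_right hq hpq m]
      have : (0:ℝ) < q ^ m := pow_pos hq m
      linarith
    have hmid : q * (1 + x) ≤ p + q * x := by linarith
    have hbr : (1 + x) * (In * pqInt p q m * q * p ^ 3 * x ^ 2)
        ≤ p ^ 2 * In ^ 2 * x ^ 2 * (p + q * x) := by
      have h1 : q * (1 + x) * (In * pqInt p q m * p ^ 3 * x ^ 2)
          ≤ (p + q * x) * (In * pqInt p q m * p ^ 3 * x ^ 2) :=
        mul_le_mul_of_nonneg_right hmid (by positivity)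
      have h2 : (p + q * x) * (In * pqInt p q m * p ^ 3 * x ^ 2)
          ≤ (p + q * x) * (In * In * p ^ 2 * x ^ 2) := by
        apply mul_le_mul_of_nonneg_left _ hP.le
        calc In * pqInt p q m * p ^ 3 * x ^ 2 = p * pqInt p q m * (In * p ^ 2 * x ^ 2) := by ring
          _ ≤ In * (In * p ^ 2 * x ^ 2) := mul_le_mul_of_nonneg_right hup (by positivity)
          _ = In * In * p ^ 2 * x ^ 2 := by ring
      calc (1 + x) * (In * pqInt p q m * q * p ^ 3 * x ^ 2)
          = q * (1 + x) * (In * pqInt p q m * p ^ 3 * x ^ 2) := by ring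
        _ ≤ (p + q * x) * (In * pqInt p q m * p ^ 3 * x ^ 2) := h1
        _ ≤ (p + q * x) * (In * In * p ^ 2 * x ^ 2) := h2
        _ = p ^ 2 * In ^ 2 * x ^ 2 * (p + q * x) := by ring
    have hAbs : |x * (V - p * In)| ≤ H * ((1 + x) * V) := by
      have hpn : (0:ℝ) < p ^ n := pow_pos hp n
      have hpqIn : 0 ≤ (p - q) * In := mul_nonneg (by linarith) hIn.le
      have h1 : |V - p * In| ≤ p ^ n + (p - q) * In := by
        rw [hVsum, abs_le]
        constructor
        · nlinarith
        · nlinarith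
      have hH' : H * q = G + (p - q) := by
        rw [hHd]
        field_simp
      have hqH : p ^ n + (p - q) * In = H * (q * In) := by
        calc p ^ n + (p - q) * In = (G + (p - q)) * In := by rw [← hGIn]; ring
          _ = H * q * In := by rw [hH']
          _ = H * (q * In) := by ring
      have h2 : |x * (V - p * In)| = x * |V - p * In| := by
        rw [abs_mul, abs_of_nonneg hx]
      rw [h2]
      calc x * |V - p * In| ≤ (1 + x) * (p ^ n + (p - q) * In) := by
            apply mul_le_mul (by linarith) h1 (abs_nonneg _) hY.le
        _ = (1 + x) * (H * (q * In)) := by rw [hqH]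
        _ ≤ (1 + x) * (H * V) := by
            apply mul_le_mul_of_nonneg_left _ hY.le
            apply mul_le_mul_of_nonneg_left hVq hH0
        _ = H * ((1 + x) * V) := by ring
    have h3a : (x * (V - p * In)) ^ 2 ≤ (H * ((1 + x) * V)) ^ 2 := by
      have := pow_le_pow_left₀ (abs_nonneg (x * (V - p * In))) hAbs 2
      rwa [sq_abs] at this
    nlinarith [mul_le_mul_of_nonneg_right h3a hP.le]
  have hDeq : Dq p q n = ((G + (p - q)) / q) ^ 2 + 1 / (q ^ 2 * n)
      + p * p ^ n / (q ^ 2 * In) := by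
    rw [Dq, hGd, hInd]
  calc (1 + x) * (In * p ^ 2 * x * (p ^ n + q ^ n * x) + In * pqInt p q m * q * p ^ 3 * x ^ 2)
      - 2 * x ^ 2 * (p + q * x) * V * (In * p) + x ^ 2 * V ^ 2 * (p + q * x)
      = (1 + x) * (In * p ^ 2 * x * p ^ n) + (1 + x) * (In * p ^ 2 * (q ^ n * x) * x)
        + ((1 + x) * (In * pqInt p q m * q * p ^ 3 * x ^ 2)
          - 2 * x ^ 2 * (p + q * x) * V * (In * p) + x ^ 2 * V ^ 2 * (p + q * x)) := by ring
    _ ≤ (p * p ^ n / (q ^ 2 * In)) * ((1 + x) ^ 2 * (p + q * x) * V ^ 2)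
        + (1 / (q ^ 2 * n)) * ((1 + x) ^ 2 * (p + q * x) * V ^ 2)
        + H ^ 2 * ((1 + x) ^ 2 * (p + q * x) * V ^ 2) := by
        refine add_le_add (add_le_add hc1 hc2) hc3
    _ = Dq p q n * ((1 + x) ^ 2 * (p + q * x) * V ^ 2) := by
        rw [hDeq, hHd]
        ring

include hq hpq hp1 in
lemma bbh_pointwise {ω f : ℝ → ℝ} (hω : IsModulus ω) (hf : MemHomega ω f)
    {n : ℕ} (hn : 1 ≤ n) {x : ℝ} (hx : 0 ≤ x) {δ : ℝ} (hδ : 0 < δ) :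
    |bbh p q n f x - f x| ≤ ω δ * (1 + Dq p q n / δ ^ 2)
      + (1 - p * q) * (|f 0| + ω 1) := by
  obtain ⟨m, rfl⟩ : ∃ m, n = m + 1 := ⟨n - 1, by omega⟩
  set n := m + 1 with hndef
  have hp : 0 < p := hp0 hq hpq
  have hY : (0:ℝ) < 1 + x := by linarith
  have hP : (0:ℝ) < p + q * x := by positivity
  have hℓ : 0 < pqEll p q n x := by
    apply Finset.prod_pos
    intro s _
    positivity
  have hIn : 0 < pqInt p q n := pqInt_pos hq hpq (by omega)
  have hV : 0 < pqInt p q (n + 1) := pqInt_pos hq hpq (by omega)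
  set ℓ := pqEll p q n x with hldef
  set In := pqInt p q n with hInd
  set V := pqInt p q (n + 1) with hVd
  set a : ℕ → ℝ := fun k => p ^ (n - k + 1) * pqInt p q k with hadef
  have hpq1 : p * q ≤ 1 := by nlinarith
  set G := p ^ n / In with hGd
  have hG0 : 0 ≤ G := by positivity
  have hGIn : G * In = p ^ n := div_mul_cancel₀ _ hIn.ne'
  set H := (G + (p - q)) / q with hHd
  have hH0 : 0 ≤ H := by
    apply div_nonneg _ hq.le
    have : 0 ≤ p - q := by linarith
    linarith
  have hD0 : 0 ≤ Dq p q n := by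
    unfold Dq
    have h1 : (0:ℝ) ≤ ((p ^ n / pqInt p q n + (p - q)) / q) ^ 2 := sq_nonneg _
    have h2 : (0:ℝ) ≤ 1 / (q ^ 2 * n) := by positivity
    have h3 : (0:ℝ) ≤ p * p ^ n / (q ^ 2 * pqInt p q n) := by positivity
    linarith
  -- the weights
  have hw : ∀ k ∈ Finset.range (n + 1), 0 ≤ cpq p q n k * x ^ k := by
    intro k hk
    have hk' := Finset.mem_range.mp hk
    exact mul_nonneg (cpq_nonneg hq hpq (by omega)) (pow_nonneg hx k)
  -- rewrite bbh
  have hbbh : bbh p q n f x = (p * q / ℓ) *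
      ∑ k ∈ Finset.range (n + 1), f (pqNode p q n k) * (cpq p q n k * x ^ k) := by
    rw [bbh]
    congr 1
    refine Finset.sum_congr rfl fun k _ => ?_
    rw [cpq]
    ring
  -- decomposition
  have hkey : bbh p q n f x - f x = (p * q / ℓ) *
      (∑ k ∈ Finset.range (n + 1), (f (pqNode p q n k) - f x) * (cpq p q n k * x ^ k))
      + (p * q - 1) * f x := by
    rw [hbbh]
    have hsum0 : ∑ k ∈ Finset.range (n + 1),
        (f (pqNode p q n k) - f x) * (cpq p q n k * x ^ k)
        = (∑ k ∈ Finset.range (n + 1), f (pqNode p q n k) * (cpq p q n k * x ^ k))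
          - f x * ℓ := by
      simp only [sub_mul]
      rw [Finset.sum_sub_distrib, ← Finset.mul_sum]
      congr 2
      exact pq_binom_thm hq hpq n x
    rw [hsum0]
    field_simp
    ring
  set S := ∑ k ∈ Finset.range (n + 1),
      |f (pqNode p q n k) - f x| * (cpq p q n k * x ^ k) with hSd
  have habs : |bbh p q n f x - f x| ≤ (p * q / ℓ) * S + (1 - p * q) * |f x| := by
    rw [hkey]
    refine (abs_add_le _ _).trans ?_
    have h1 : |(p * q / ℓ) * ∑ k ∈ Finset.range (n + 1),
        (f (pqNode p q n k) - f x) * (cpq p q n k * x ^ k)| ≤ (p * q / ℓ) * S := by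
      rw [abs_mul, abs_of_pos (by positivity : (0:ℝ) < p * q / ℓ)]
      apply mul_le_mul_of_nonneg_left _ (by positivity)
      refine (Finset.abs_sum_le_sum_abs _ _).trans ?_
      apply Finset.sum_le_sum
      intro k hk
      rw [abs_mul, abs_of_nonneg (hw k hk)]
    have h2 : |(p * q - 1) * f x| = (1 - p * q) * |f x| := by
      rw [abs_mul, abs_of_nonpos (by linarith : p * q - 1 ≤ 0)]
      ring
    linarith
  -- per-term modulus bound
  set C := δ ^ 2 * (1 + x) ^ 2 * V ^ 2 with hCd
  have hC : 0 < C := by positivity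
  have hterm : ∀ k ∈ Finset.range (n + 1),
      |f (pqNode p q n k) - f x| * (cpq p q n k * x ^ k)
        ≤ (ω δ * (1 + ((1 + x) * a k - x * V) ^ 2 / C)) * (cpq p q n k * x ^ k) := by
    intro k hk
    have hk' := Finset.mem_range.mp hk
    have hkn : k ≤ n := by omega
    refine mul_le_mul_of_nonneg_right ?_ (hw k hk)
    have hnode := pqNode_nonneg hq hpq hkn
    have h1 : |f (pqNode p q n k) - f x| ≤
        ω |pqNode p q n k / (1 + pqNode p q n k) - x / (1 + x)| := hf _ _ hnode hx
    rw [pqNode_frac hq hpq hkn] at h1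
    have h2 : |p ^ (n - k + 1) * pqInt p q k / pqInt p q (n + 1) - x / (1 + x)|
        = |(1 + x) * a k - x * V| / ((1 + x) * V) := by
      rw [div_sub_div _ _ hV.ne' hY.ne', abs_div, abs_of_pos (mul_pos hV hY)]
      rw [show p ^ (n - k + 1) * pqInt p q k * (1 + x) - V * x = (1 + x) * a k - x * V
        from by rw [hadef]; ring]
      rw [mul_comm V (1 + x)]
    rw [h2] at h1
    have hd0 : 0 ≤ |(1 + x) * a k - x * V| / ((1 + x) * V) := by positivity
    have h3 := mod_quad hω hδ hd0
    have h4 : (|(1 + x) * a k - x * V| / ((1 + x) * V)) ^ 2 / δ ^ 2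
        = ((1 + x) * a k - x * V) ^ 2 / C := by
      rw [div_pow, sq_abs, hCd]
      rw [div_div]
      congr 1
      ring
    rw [h4] at h3
    calc |f (pqNode p q n k) - f x| ≤ _ := h1
      _ ≤ (1 + ((1 + x) * a k - x * V) ^ 2 / C) * ω δ := h3
      _ = ω δ * (1 + ((1 + x) * a k - x * V) ^ 2 / C) := by ring
  set Q := ∑ k ∈ Finset.range (n + 1),
      ((1 + x) * a k - x * V) ^ 2 * (cpq p q n k * x ^ k) with hQd
  have hS : S ≤ ω δ * ℓ + (ω δ / C) * Q := by
    rw [hSd]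
    refine (Finset.sum_le_sum hterm).trans_eq ?_
    have hexp : ∀ k ∈ Finset.range (n + 1),
        (ω δ * (1 + ((1 + x) * a k - x * V) ^ 2 / C)) * (cpq p q n k * x ^ k)
        = ω δ * (cpq p q n k * x ^ k)
          + (ω δ / C) * (((1 + x) * a k - x * V) ^ 2 * (cpq p q n k * x ^ k)) := by
      intro k _
      field_simp
    rw [Finset.sum_congr rfl hexp, Finset.sum_add_distrib, ← Finset.mul_sum, ← Finset.mul_sum,
      pq_binom_thm hq hpq n x]
  -- second moment computation
  set T1 := ∑ k ∈ Finset.range (n + 1),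
      cpq p q n k * (p ^ (n - k + 1) * pqInt p q k) * x ^ k with hT1d
  set T2 := ∑ k ∈ Finset.range (n + 1),
      cpq p q n k * (p ^ (n - k + 1) * pqInt p q k) ^ 2 * x ^ k with hT2d
  have hI1 := I1 hq hpq n x
  have hI2 := I2 hq hpq n x
  rw [← hT1d] at hI1
  rw [← hT2d] at hI2
  have hQsplit : Q = (1 + x) ^ 2 * T2 - 2 * x * (1 + x) * V * T1 + x ^ 2 * V ^ 2 * ℓ := by
    rw [hQd]
    have hper : ∀ k ∈ Finset.range (n + 1),
        ((1 + x) * a k - x * V) ^ 2 * (cpq p q n k * x ^ k)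
        = (1 + x) ^ 2 * (cpq p q n k * (p ^ (n - k + 1) * pqInt p q k) ^ 2 * x ^ k)
          - 2 * x * (1 + x) * V * (cpq p q n k * (p ^ (n - k + 1) * pqInt p q k) * x ^ k)
          + x ^ 2 * V ^ 2 * (cpq p q n k * x ^ k) := by
      intro k _
      rw [hadef]
      ring
    rw [Finset.sum_congr rfl hper]
    rw [Finset.sum_add_distrib, Finset.sum_sub_distrib, ← Finset.mul_sum, ← Finset.mul_sum,
      ← Finset.mul_sum, pq_binom_thm hq hpq n x]
  have hnm : n - 1 = m := by omega
  rw [hnm] at hI2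
  set R := (1 + x) * (In * p ^ 2 * x * (p ^ n + q ^ n * x) + In * pqInt p q m * q * p ^ 3 * x ^ 2)
      - 2 * x ^ 2 * (p + q * x) * V * (In * p) + x ^ 2 * V ^ 2 * (p + q * x) with hRd
  have hQP : Q * (p + q * x) = ℓ * R := by
    rw [hRd]
    linear_combination (p + q * x) * hQsplit + (1 + x) * hI2 - 2 * x * (p + q * x) * V * hI1
  have hωδ : 0 ≤ ω δ := hω.1 δ hδ.le
  have hR : R ≤ Dq p q n * ((1 + x) ^ 2 * (p + q * x) * V ^ 2) := by
    rw [hRd, hVd, hInd, hndef]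
    exact Rbound hq hpq hp1 hx m
  have hQD : Q ≤ Dq p q n * ℓ * ((1 + x) ^ 2 * V ^ 2) := by
    have h1 : Q * (p + q * x) ≤ (Dq p q n * ℓ * ((1 + x) ^ 2 * V ^ 2)) * (p + q * x) := by
      rw [hQP]
      calc ℓ * R ≤ ℓ * (Dq p q n * ((1 + x) ^ 2 * (p + q * x) * V ^ 2)) :=
            mul_le_mul_of_nonneg_left hR hℓ.le
        _ = (Dq p q n * ℓ * ((1 + x) ^ 2 * V ^ 2)) * (p + q * x) := by ring
    exact le_of_mul_le_mul_right h1 hP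
  have hfinal1 : (ω δ / C) * Q ≤ ω δ * (Dq p q n / δ ^ 2) * ℓ := by
    have h1 : (ω δ / C) * Q ≤ (ω δ / C) * (Dq p q n * ℓ * ((1 + x) ^ 2 * V ^ 2)) :=
      mul_le_mul_of_nonneg_left hQD (by positivity)
    have h2 : (ω δ / C) * (Dq p q n * ℓ * ((1 + x) ^ 2 * V ^ 2))
        = ω δ * (Dq p q n / δ ^ 2) * ℓ := by
      rw [hCd]
      field_simp
    rw [h2] at h1
    exact h1
  have hSfin : S ≤ (ω δ * (1 + Dq p q n / δ ^ 2)) * ℓ := by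
    calc S ≤ ω δ * ℓ + (ω δ / C) * Q := hS
      _ ≤ ω δ * ℓ + ω δ * (Dq p q n / δ ^ 2) * ℓ := add_le_add_right hfinal1 _
      _ = (ω δ * (1 + Dq p q n / δ ^ 2)) * ℓ := by ring
  have hfx : |f x| ≤ |f 0| + ω 1 := by
    have h1 := hf x 0 hx le_rfl
    norm_num at h1
    have hX0 : 0 ≤ x / (1 + x) := by positivity
    have hX1 : x / (1 + x) ≤ 1 := by
      rw [div_le_one hY]
      linarith
    have h2 : ω |x / (1 + x)| ≤ ω 1 := by
      rw [abs_of_nonneg hX0]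
      exact hω.2.1 _ _ hX0 hX1
    have h3 : |f x - f 0| ≤ ω 1 := h1.trans h2
    calc |f x| = |f 0 + (f x - f 0)| := by congr 1; ring
      _ ≤ |f 0| + |f x - f 0| := abs_add_le _ _
      _ ≤ |f 0| + ω 1 := add_le_add_right h3 _
  have hωpos : 0 ≤ ω δ * (1 + Dq p q n / δ ^ 2) := by
    apply mul_nonneg hωδ
    have h1 : 0 ≤ Dq p q n / δ ^ 2 := div_nonneg hD0 (sq_nonneg δ)
    linarith
  have hmulid : (p * q / ℓ) * ((ω δ * (1 + Dq p q n / δ ^ 2)) * ℓ)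
      = p * q * (ω δ * (1 + Dq p q n / δ ^ 2)) := by
    field_simp
  calc |bbh p q n f x - f x| ≤ (p * q / ℓ) * S + (1 - p * q) * |f x| := habs
    _ ≤ (p * q / ℓ) * ((ω δ * (1 + Dq p q n / δ ^ 2)) * ℓ)
        + (1 - p * q) * (|f 0| + ω 1) := by
        refine add_le_add ?_ ?_
        · exact mul_le_mul_of_nonneg_left hSfin (by positivity)
        · exact mul_le_mul_of_nonneg_left hfx (by linarith)
    _ = p * q * (ω δ * (1 + Dq p q n / δ ^ 2)) + (1 - p * q) * (|f 0| + ω 1) := by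
        rw [hmulid]
    _ ≤ ω δ * (1 + Dq p q n / δ ^ 2) + (1 - p * q) * (|f 0| + ω 1) := by
        refine add_le_add ?_ le_rfl
        calc p * q * (ω δ * (1 + Dq p q n / δ ^ 2))
            ≤ 1 * (ω δ * (1 + Dq p q n / δ ^ 2)) :=
              mul_le_mul_of_nonneg_right hpq1 hωpos
          _ = ω δ * (1 + Dq p q n / δ ^ 2) := one_mul _

end Pointwise
lemma tendsto_statConv {a : ℕ → ℝ} {l : ℝ} (h : Tendsto a atTop (nhds l)) :
    StatConv a l := by
  intro ε hε
  obtain ⟨N, hN⟩ := Metric.tendsto_atTop.mp h ε hε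
  have hcard : ∀ n : ℕ,
      ((((Finset.range (n + 1)).filter (fun k => ε ≤ |a k - l|)).card : ℝ)) ≤ N := by
    intro n
    have hsub : (Finset.range (n + 1)).filter (fun k => ε ≤ |a k - l|) ⊆ Finset.range N := by
      intro k hk
      simp only [Finset.mem_filter, Finset.mem_range] at hk ⊢
      by_contra hkN
      push_neg at hkN
      have h2 := hN k hkN
      rw [Real.dist_eq] at h2
      linarith [hk.2]
    have := Finset.card_le_card hsub
    rw [Finset.card_range] at this
    exact_mod_cast this
  apply squeeze_zero' (g := fun n : ℕ => (N : ℝ) / n)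
  · filter_upwards [eventually_ge_atTop 1] with n _
    positivity
  · filter_upwards [eventually_ge_atTop 1] with n hn
    have hn0 : (0:ℝ) < n := by exact_mod_cast hn
    exact (div_le_div_iff_of_pos_right hn0).mpr (hcard n)
  · exact tendsto_const_div_atTop_nhds_zero_nat (N:ℝ)

lemma S_atTop {t : ℕ → ℝ} (h0 : ∀ n, 0 < t n) (h1 : ∀ n, t n < 1)
    (hlim : Tendsto t atTop (nhds 1)) :
    Tendsto (fun n => ∑ i ∈ Finset.range n, (t n) ^ i) atTop atTop := by
  rw [tendsto_atTop]
  intro b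
  set M := max b 1 with hM
  have hM1 : (1:ℝ) ≤ M := le_max_right _ _
  have hM0 : (0:ℝ) < M := lt_of_lt_of_le one_pos hM1
  have hev1 : ∀ᶠ n in atTop, 1 - 1/(2*M) < t n := by
    apply (tendsto_order.mp hlim).1
    have : (0:ℝ) < 1/(2*M) := by positivity
    linarith
  filter_upwards [hev1, eventually_ge_atTop ⌈2*M⌉₊] with n htn hn
  have hb : b ≤ M := le_max_left _ _
  refine hb.trans ?_
  have hs0 := h0 n
  have hs1 := h1 n
  have hgeom : ∑ i ∈ Finset.range n, (t n) ^ i = (1 - (t n)^n)/(1 - t n) := by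
    rw [geom_sum_eq (by linarith : t n ≠ 1)]
    rw [div_eq_div_iff (by linarith) (by linarith)]
    ring
  have hnM : 2*M ≤ (n:ℝ) := by
    calc (2:ℝ)*M ≤ ⌈2*M⌉₊ := Nat.le_ceil _
      _ ≤ (n:ℝ) := by exact_mod_cast hn
  rcases le_or_gt ((t n)^n) (1/2) with hcase | hcase
  · rw [hgeom]
    have h1s : 0 < 1 - t n := by linarith
    have h1s' : 1 - t n ≤ 1/(2*M) := by linarith
    have hnum : (1:ℝ)/2 ≤ 1 - (t n)^n := by linarith
    calc M = (1/2) / (1/(2*M)) := by field_simp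
      _ ≤ (1 - (t n)^n)/(1 - t n) := div_le_div₀ (by linarith) hnum h1s h1s'
  · have hterm : ∀ i ∈ Finset.range n, (1:ℝ)/2 ≤ (t n) ^ i := by
      intro i hi
      have hi' := Finset.mem_range.mp hi
      have h2 : (t n) ^ n ≤ (t n) ^ i := pow_le_pow_of_le_one hs0.le hs1.le (by omega)
      linarith
    have hsum : (n:ℝ)*(1/2) ≤ ∑ i ∈ Finset.range n, (t n)^i := by
      calc (n:ℝ)*(1/2) = ∑ _i ∈ Finset.range n, (1:ℝ)/2 := by
            rw [Finset.sum_const, Finset.card_range, nsmul_eq_mul]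
        _ ≤ _ := Finset.sum_le_sum hterm
    linarith

lemma G_tendsto {p q : ℕ → ℝ} (hq : ∀ n, 0 < q n) (hqp : ∀ n, q n < p n)
    (hp : ∀ n, p n ≤ 1) (hpl : Tendsto p atTop (nhds 1)) (hql : Tendsto q atTop (nhds 1)) :
    Tendsto (fun n => (p n) ^ n / pqInt (p n) (q n) n) atTop (nhds 0) := by
  have hp0' : ∀ n, 0 < p n := fun n => (hq n).trans (hqp n)
  have ht0 : ∀ n, 0 < q n / p n := fun n => div_pos (hq n) (hp0' n)
  have ht1 : ∀ n, q n / p n < 1 := fun n => (div_lt_one (hp0' n)).mpr (hqp n)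
  have htl : Tendsto (fun n => q n / p n) atTop (nhds 1) := by
    have := hql.div hpl (one_ne_zero)
    rw [div_one] at this
    exact this
  have hS := S_atTop ht0 ht1 htl
  have hSpos : ∀ n ≥ 1, (1:ℝ) ≤ ∑ i ∈ Finset.range n, (q n / p n) ^ i := by
    intro n hn
    have h0mem : 0 ∈ Finset.range n := Finset.mem_range.mpr (by omega)
    have := Finset.single_le_sum (f := fun i => (q n / p n) ^ i)
      (fun i _ => (pow_pos (ht0 n) i).le) h0mem
    simpa using this
  have hGle : ∀ᶠ n in atTop, (p n) ^ n / pqInt (p n) (q n) n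
      ≤ 1 / ∑ i ∈ Finset.range n, (q n / p n) ^ i := by
    filter_upwards [eventually_ge_atTop 1] with n hn
    have hSn : (0:ℝ) < ∑ i ∈ Finset.range n, (q n / p n) ^ i := by
      linarith [hSpos n hn]
    have hIe := pqInt_S (hq n) (hqp n) hn
    rw [hIe]
    obtain ⟨m, rfl⟩ : ∃ m, n = m + 1 := ⟨n - 1, by omega⟩
    have e1 : m + 1 - 1 = m := by omega
    rw [e1]
    have hpm : (0:ℝ) < (p (m+1)) ^ m := pow_pos (hp0' (m+1)) m
    have key : (p (m+1)) ^ (m+1) /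
        ((p (m+1)) ^ m * ∑ i ∈ Finset.range (m+1), (q (m+1) / p (m+1)) ^ i)
        = p (m+1) / ∑ i ∈ Finset.range (m+1), (q (m+1) / p (m+1)) ^ i := by
      rw [pow_succ]
      exact mul_div_mul_left _ _ hpm.ne'
    rw [key]
    exact (div_le_div_iff_of_pos_right hSn).mpr (hp _)
  have hG0 : ∀ n : ℕ, 0 ≤ (p n) ^ n / pqInt (p n) (q n) n := fun n =>
    div_nonneg (pow_pos (hp0' n) n).le (pqInt_nonneg (hq n) (hqp n) n)
  have hinv : Tendsto (fun n : ℕ => 1 / ∑ i ∈ Finset.range n, (q n / p n) ^ i)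
      atTop (nhds 0) := by
    have := tendsto_inv_atTop_zero.comp hS
    simpa [one_div, Function.comp_def] using this
  exact squeeze_zero' (Eventually.of_forall hG0) hGle hinv

lemma D_tendsto {p q : ℕ → ℝ} (hq : ∀ n, 0 < q n) (hqp : ∀ n, q n < p n)
    (hp : ∀ n, p n ≤ 1) (hpl : Tendsto p atTop (nhds 1)) (hql : Tendsto q atTop (nhds 1)) :
    Tendsto (fun n => Dq (p n) (q n) n) atTop (nhds 0) := by
  have hG := G_tendsto hq hqp hp hpl hql
  have h1 : Tendsto (fun n => (((p n) ^ n / pqInt (p n) (q n) n + (p n - q n)) / q n) ^ 2)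
      atTop (nhds 0) := by
    have := ((hG.add (hpl.sub hql)).div hql one_ne_zero).pow 2
    norm_num at this
    exact this
  have h2 : Tendsto (fun n : ℕ => 1 / ((q n) ^ 2 * n)) atTop (nhds 0) := by
    have ha : Tendsto (fun n : ℕ => ((q n) ^ 2)⁻¹) atTop (nhds 1) := by
      have := ((hql.pow 2).inv₀ (by norm_num))
      norm_num at this
      exact this
    have hb : Tendsto (fun n : ℕ => (n : ℝ)⁻¹) atTop (nhds 0) :=
      tendsto_inv_atTop_zero.comp tendsto_natCast_atTop_atTop
    have := ha.mul hb
    norm_num at this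
    refine this.congr fun n => ?_
    rw [one_div, mul_inv]
  have h3 : Tendsto (fun n => p n * ((p n) ^ n / pqInt (p n) (q n) n) / (q n) ^ 2)
      atTop (nhds 0) := by
    have := (hpl.mul hG).div (hql.pow 2) (by norm_num)
    norm_num at this
    exact this
  have hsum := (h1.add h2).add h3
  norm_num at hsum
  refine hsum.congr fun n => ?_
  rw [Dq]
  ring

/-- Theorem 2.2, statistical Korovkin-type convergence. -/
theorem bbh_statConv (p q : ℕ → ℝ)
    (hq : ∀ n, 0 < q n) (hqp : ∀ n, q n < p n) (hp : ∀ n, p n ≤ 1)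
    (hpl : Tendsto p atTop (nhds 1)) (hql : Tendsto q atTop (nhds 1))
    (ω : ℝ → ℝ) (hω : IsModulus ω) (f : ℝ → ℝ) (hf : MemHomega ω f) :
    StatConv (fun n : ℕ =>
      ⨆ x : {t : ℝ // 0 ≤ t}, |bbh (p n) (q n) n f x.1 - f x.1|) 0 := by
  apply tendsto_statConv
  have hNE : Nonempty {t : ℝ // 0 ≤ t} := ⟨⟨0, le_rfl⟩⟩
  set K := |f 0| + ω 1 with hKd
  have hK0 : 0 ≤ K := by
    have := hω.1 1 one_pos.le
    have := abs_nonneg (f 0)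
    rw [hKd]
    linarith
  have hD := D_tendsto hq hqp hp hpl hql
  have hpqK : Tendsto (fun n => (1 - p n * q n) * K) atTop (nhds 0) := by
    have h1 : Tendsto (fun n => (1 - p n * q n) * K) atTop (nhds ((1 - 1 * 1) * K)) :=
      (tendsto_const_nhds.sub (hpl.mul hql)).mul_const K
    norm_num at h1
    exact h1
  rw [Metric.tendsto_atTop]
  intro ε hε
  -- choose δ
  have hδev : ∀ᶠ d in nhdsWithin 0 (Set.Ioi 0), ω d < ε / 4 :=
    (tendsto_order.mp hω.2.2.2).2 (ε / 4) (by linarith)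
  obtain ⟨δ, hωδ, hδpos⟩ := (hδev.and eventually_mem_nhdsWithin).exists
  rw [Set.mem_Ioi] at hδpos
  have hωδ0 : 0 ≤ ω δ := hω.1 δ hδpos.le
  -- eventual conditions
  have hDev : ∀ᶠ n in atTop, Dq (p n) (q n) n < δ ^ 2 :=
    (tendsto_order.mp hD).2 (δ ^ 2) (by positivity)
  have hpqKev : ∀ᶠ n in atTop, (1 - p n * q n) * K < ε / 4 :=
    (tendsto_order.mp hpqK).2 (ε / 4) (by linarith)
  have hfinal : ∀ᶠ n in atTop,
      dist (⨆ x : {t : ℝ // 0 ≤ t}, |bbh (p n) (q n) n f x.1 - f x.1|) 0 < ε := by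
    filter_upwards [hDev, hpqKev, eventually_ge_atTop 1] with n hDn hKn hn1
    have hDn0 : 0 ≤ Dq (p n) (q n) n := by
      have h1 : (0:ℝ) ≤ ((p n ^ n / pqInt (p n) (q n) n + (p n - q n)) / q n) ^ 2 :=
        sq_nonneg _
      have h2 : (0:ℝ) ≤ 1 / ((q n) ^ 2 * n) := by positivity
      have h3 : (0:ℝ) ≤ p n * (p n) ^ n / ((q n) ^ 2 * pqInt (p n) (q n) n) := by
        have hpn : 0 < p n := (hq n).trans (hqp n)
        have hIn : 0 ≤ pqInt (p n) (q n) n := pqInt_nonneg (hq n) (hqp n) n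
        positivity
      rw [Dq]
      linarith
    have hb : ∀ x : {t : ℝ // 0 ≤ t}, |bbh (p n) (q n) n f x.1 - f x.1|
        ≤ ω δ * (1 + Dq (p n) (q n) n / δ ^ 2) + (1 - p n * q n) * K :=
      fun x => bbh_pointwise (hq n) (hqp n) (hp n) hω hf hn1 x.2 hδpos
    have hA_le : (⨆ x : {t : ℝ // 0 ≤ t}, |bbh (p n) (q n) n f x.1 - f x.1|)
        ≤ ω δ * (1 + Dq (p n) (q n) n / δ ^ 2) + (1 - p n * q n) * K := ciSup_le hb
    have hA0 : 0 ≤ ⨆ x : {t : ℝ // 0 ≤ t}, |bbh (p n) (q n) n f x.1 - f x.1| :=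
      Real.iSup_nonneg fun x => abs_nonneg _
    have hDδ : Dq (p n) (q n) n / δ ^ 2 ≤ 1 := by
      rw [div_le_one (by positivity)]
      linarith
    have hstep : ω δ * (1 + Dq (p n) (q n) n / δ ^ 2) ≤ ω δ * 2 := by
      apply mul_le_mul_of_nonneg_left _ hωδ0
      linarith
    rw [Real.dist_eq, sub_zero, abs_of_nonneg hA0]
    calc (⨆ x : {t : ℝ // 0 ≤ t}, |bbh (p n) (q n) n f x.1 - f x.1|)
        ≤ ω δ * (1 + Dq (p n) (q n) n / δ ^ 2) + (1 - p n * q n) * K := hA_le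
      _ ≤ ω δ * 2 + (1 - p n * q n) * K := add_le_add hstep le_rfl
      _ < (ε / 4) * 2 + ε / 4 := by
          have : ω δ * 2 < (ε / 4) * 2 := by linarith
          linarith
      _ < ε := by linarith
  obtain ⟨N, hN⟩ := eventually_atTop.mp hfinal
  exact ⟨N, hN⟩
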